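/- Converse of Theorem 1.1: Suppose the rule ∑_{ν=1}^n λ_ν g(t_ν), with distinct nodes t_ν ∈ supp(dλ), integrates exactly against dλ all polynomials of degree ≤ 2n−m−1 and all functions (1+ζ_μ t)^{−s}, μ = 1,…,M, s = 1,…,s_μ. Then the rule with nodes t_ν and weights w_ν = λ_ν / ω_m(t_ν) integrates exactly all polynomials of degree ≤ 2n−1 against the measure dλ/ω_m. -/

import Mathlib

open MeasureTheory Finset

/-- The support of a measure on ℝ: points all of whose neighborhoods have
positive measure. -/
def measSupport (μ : Measure ℝ) : Set ℝ := {x | ∀ U ∈ nhds x, μ U ≠ 0}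

section Aux

open Polynomial

noncomputable def dpoly {M : ℕ} (ζ : Fin M → ℂ) (μ : Fin M) : Polynomial ℂ :=
  C (ζ μ) * X + C 1

lemma dpoly_degree {M : ℕ} (ζ : Fin M → ℂ) (hζ0 : ∀ μ, ζ μ ≠ 0) (μ : Fin M) :
    (dpoly ζ μ).degree = 1 := degree_linear (hζ0 μ)

lemma dpoly_ne_zero {M : ℕ} (ζ : Fin M → ℂ) (hζ0 : ∀ μ, ζ μ ≠ 0) (μ : Fin M) :
    dpoly ζ μ ≠ 0 := fun h => by
  have := dpoly_degree ζ hζ0 μ; rw [h] at this; simp at this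

lemma dpoly_eval {M : ℕ} (ζ : Fin M → ℂ) (μ : Fin M) (z : ℂ) :
    (dpoly ζ μ).eval z = 1 + ζ μ * z := by simp [dpoly]; ring

lemma dpoly_pow_degree {M : ℕ} (ζ : Fin M → ℂ) (hζ0 : ∀ μ, ζ μ ≠ 0) (μ : Fin M) (k : ℕ) :
    (dpoly ζ μ ^ k).degree = (k : WithBot ℕ) := by
  rw [degree_pow, dpoly_degree ζ hζ0, nsmul_eq_mul, mul_one]

lemma dpoly_coprime {M : ℕ} (ζ : Fin M → ℂ) (hζ0 : ∀ μ, ζ μ ≠ 0)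
    (hζinj : Function.Injective ζ) {μ μ' : Fin M} (h : μ ≠ μ') :
    IsCoprime (dpoly ζ μ) (dpoly ζ μ') := by
  have hne : ζ μ' - ζ μ ≠ 0 := sub_ne_zero.mpr fun he => h (hζinj he.symm)
  refine ⟨C (ζ μ' * (ζ μ' - ζ μ)⁻¹), C (-(ζ μ) * (ζ μ' - ζ μ)⁻¹), ?_⟩
  apply Polynomial.funext
  intro x
  simp [dpoly]
  field_simp
  ring

noncomputable def bpoly {M : ℕ} (ζ : Fin M → ℂ) (s : Fin M → ℕ)
    (i : Σ μ : Fin M, Fin (s μ)) : Polynomial ℂ :=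
  (∏ μ' ∈ Finset.univ.erase i.1, dpoly ζ μ' ^ s μ') * dpoly ζ i.1 ^ (s i.1 - (i.2 + 1))

lemma bpoly_degree_lt {M : ℕ} (ζ : Fin M → ℂ) (hζ0 : ∀ μ, ζ μ ≠ 0)
    (s : Fin M → ℕ) (i : Σ μ : Fin M, Fin (s μ)) :
    (bpoly ζ s i).degree < ((∑ μ, s μ : ℕ) : WithBot ℕ) := by
  obtain ⟨μ, j⟩ := i
  have hA : (∑ μ' ∈ Finset.univ.erase μ, s μ') + s μ = ∑ μ', s μ' :=
    Finset.sum_erase_add _ _ (Finset.mem_univ μ)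
  rw [bpoly, degree_mul, degree_prod]
  simp only [dpoly_pow_degree ζ hζ0]
  rw [← Nat.cast_sum, ← Nat.cast_add, Nat.cast_lt]
  have := j.isLt
  omega

lemma bpoly_linearIndependent {M : ℕ} (ζ : Fin M → ℂ) (hζ0 : ∀ μ, ζ μ ≠ 0)
    (hζinj : Function.Injective ζ) (s : Fin M → ℕ) :
    LinearIndependent ℂ (bpoly ζ s) := by
  rw [Fintype.linearIndependent_iff]
  intro c hc
  set Q : Fin M → Polynomial ℂ := fun μ =>
    ∑ j : Fin (s μ), C (c ⟨μ, j⟩) * dpoly ζ μ ^ (s μ - (j + 1)) with hQ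
  have hc' : ∑ μ, (∏ μ' ∈ Finset.univ.erase μ, dpoly ζ μ' ^ s μ') * Q μ = 0 := by
    rw [← hc, ← Finset.univ_sigma_univ, Finset.sum_sigma]
    congr 1
    funext μ
    rw [hQ, Finset.mul_sum]
    congr 1
    funext j
    rw [bpoly, smul_eq_C_mul]
    ring
  suffices hQ0 : ∀ μ, Q μ = 0 by
    rintro ⟨μ, j⟩
    set R : Polynomial ℂ := ∑ j' : Fin (s μ), C (c ⟨μ, j'⟩) * X ^ (s μ - (j' + 1)) with hR
    have hReval : ∀ y : ℂ, R.eval y = 0 := by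
      intro y
      have hx : (dpoly ζ μ).eval ((y - 1) / ζ μ) = y := by
        have hz : ζ μ * ((y - 1) / ζ μ) = y - 1 := mul_div_cancel₀ _ (hζ0 μ)
        rw [dpoly_eval, hz]; ring
      have := congrArg (Polynomial.eval ((y - 1) / ζ μ)) (hQ0 μ)
      rw [hQ] at this
      simp only [eval_finset_sum, eval_mul, eval_pow, eval_C, eval_zero, hx] at this
      rw [hR]
      simpa [eval_finset_sum] using this
    have hR0 : R = 0 := Polynomial.funext (by simpa using hReval)
    have := congrArg (fun p => Polynomial.coeff p (s μ - (j + 1))) hR0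
    simp only [hR, finset_sum_coeff, coeff_C_mul, coeff_X_pow, coeff_zero] at this
    rw [Finset.sum_eq_single j] at this
    · simpa using this
    · intro j' _ hj'
      have h1 := j.isLt; have h2 := j'.isLt
      have : ¬ (s μ - (j + 1) = s μ - (j' + 1)) := by
        intro he
        exact hj' (Fin.ext (by omega))
      simp [this]
    · simp
  intro μ
  have hdvd : dpoly ζ μ ^ s μ ∣ (∏ μ' ∈ Finset.univ.erase μ, dpoly ζ μ' ^ s μ') * Q μ := by
    have := Finset.add_sum_erase Finset.univ
      (fun μ'' => (∏ μ' ∈ Finset.univ.erase μ'', dpoly ζ μ' ^ s μ') * Q μ'') (Finset.mem_univ μ)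
    rw [hc'] at this
    have heq : (∏ μ' ∈ Finset.univ.erase μ, dpoly ζ μ' ^ s μ') * Q μ =
        -∑ μ'' ∈ Finset.univ.erase μ,
          (∏ μ' ∈ Finset.univ.erase μ'', dpoly ζ μ' ^ s μ') * Q μ'' := by
      linear_combination this
    rw [heq]
    apply dvd_neg.mpr
    apply Finset.dvd_sum
    intro μ'' hμ''
    have hμμ'' : μ ∈ Finset.univ.erase μ'' := by
      simp only [Finset.mem_erase] at hμ'' ⊢
      exact ⟨fun h => hμ''.1 h.symm, Finset.mem_univ _⟩
    exact dvd_mul_of_dvd_left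
      (Finset.dvd_prod_of_mem (fun μ' => dpoly ζ μ' ^ s μ') hμμ'') _
  have hcop : IsCoprime (dpoly ζ μ ^ s μ)
      (∏ μ' ∈ Finset.univ.erase μ, dpoly ζ μ' ^ s μ') := by
    apply IsCoprime.pow_left
    apply IsCoprime.prod_right
    intro μ' hμ'
    exact (dpoly_coprime ζ hζ0 hζinj (Finset.ne_of_mem_erase hμ').symm).pow_right
  have hQdvd : dpoly ζ μ ^ s μ ∣ Q μ := hcop.dvd_of_dvd_mul_left hdvd
  by_cases hQz : Q μ = 0
  · exact hQz
  · exfalso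
    have hdegQ : (Q μ).degree < (dpoly ζ μ ^ s μ).degree := by
      rw [dpoly_pow_degree ζ hζ0]
      apply lt_of_le_of_lt (degree_sum_le _ _)
      rw [Finset.sup_lt_iff (by exact_mod_cast WithBot.bot_lt_coe _)]
      intro j _
      apply lt_of_le_of_lt (degree_mul_le _ _)
      have h1 : (C (c ⟨μ, j⟩)).degree ≤ 0 := degree_C_le
      calc (C (c ⟨μ, j⟩)).degree + (dpoly ζ μ ^ (s μ - (j + 1))).degree
          ≤ 0 + ((s μ - (j + 1) : ℕ) : WithBot ℕ) :=
            add_le_add h1 (le_of_eq (dpoly_pow_degree ζ hζ0 μ _))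
        _ = ((s μ - (j + 1) : ℕ) : WithBot ℕ) := by rw [zero_add]
        _ < ((s μ : ℕ) : WithBot ℕ) := by
            rw [Nat.cast_lt]; have := j.isLt; omega
    exact hQz (eq_zero_of_dvd_of_degree_lt hQdvd hdegQ)

lemma exists_decomp {M : ℕ} (ζ : Fin M → ℂ) (hζ0 : ∀ μ, ζ μ ≠ 0)
    (hζinj : Function.Injective ζ) (s : Fin M → ℕ)
    (r : Polynomial ℂ) (hr : r.degree < ((∑ μ, s μ : ℕ) : WithBot ℕ)) :
    ∃ c : (Σ μ : Fin M, Fin (s μ)) → ℂ, r = ∑ i, c i • bpoly ζ s i := by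
  set m := ∑ μ, s μ with hm
  have hfd : FiniteDimensional ℂ (Polynomial.degreeLT ℂ m) :=
    LinearEquiv.finiteDimensional (Polynomial.degreeLTEquiv ℂ m).symm
  set b' : (Σ μ : Fin M, Fin (s μ)) → Polynomial.degreeLT ℂ m := fun i =>
    ⟨bpoly ζ s i, Polynomial.mem_degreeLT.mpr (bpoly_degree_lt ζ hζ0 s i)⟩ with hb'
  have hli : LinearIndependent ℂ b' := by
    apply LinearIndependent.of_comp (Polynomial.degreeLT ℂ m).subtype
    have : (Polynomial.degreeLT ℂ m).subtype ∘ b' = bpoly ζ s := rfl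
    rw [this]
    exact bpoly_linearIndependent ζ hζ0 hζinj s
  have hcard : Fintype.card (Σ μ : Fin M, Fin (s μ)) =
      Module.finrank ℂ (Polynomial.degreeLT ℂ m) := by
    rw [Fintype.card_sigma]
    simp only [Fintype.card_fin]
    rw [(Polynomial.degreeLTEquiv ℂ m).finrank_eq, Module.finrank_fin_fun]
  have hspan := hli.span_eq_top_of_card_eq_finrank' hcard
  have hrmem : r ∈ Polynomial.degreeLT ℂ m := Polynomial.mem_degreeLT.mpr hr
  have : (⟨r, hrmem⟩ : Polynomial.degreeLT ℂ m) ∈ Submodule.span ℂ (Set.range b') := by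
    rw [hspan]; trivial
  obtain ⟨c, hc⟩ := (Finsupp.mem_span_range_iff_exists_finsupp).mp this
  refine ⟨fun i => c i, ?_⟩
  have hval := congrArg (Subtype.val) hc
  simp only [Submodule.coe_subtype] at hval
  rw [Finsupp.sum_fintype _ _ (fun i => by simp)] at hval
  calc r = ((⟨r, hrmem⟩ : Polynomial.degreeLT ℂ m) : Polynomial ℂ) := rfl
    _ = ((∑ i, c i • b' i : Polynomial.degreeLT ℂ m) : Polynomial ℂ) := by rw [hval]
    _ = ∑ i, c i • bpoly ζ s i := by
        rw [Submodule.coe_sum]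
        rfl

lemma measSupport_compl_null (lam : Measure ℝ) :
    lam ((closure (measSupport lam))ᶜ) = 0 := by
  set K := closure (measSupport lam)
  have hcov : ∀ x ∈ Kᶜ, ∃ V : Set ℝ, IsOpen V ∧ x ∈ V ∧ lam V = 0 := by
    intro x hx
    have hx' : x ∉ measSupport lam := fun h => hx (subset_closure h)
    simp only [measSupport, Set.mem_setOf_eq, not_forall] at hx'
    obtain ⟨U, hU, hU0⟩ := hx'
    simp only [not_not] at hU0
    exact ⟨interior U, isOpen_interior, mem_interior_iff_mem_nhds.mpr hU,
      measure_mono_null interior_subset hU0⟩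
  set S : Set (Set ℝ) := {V | IsOpen V ∧ lam V = 0} with hS
  obtain ⟨T, hTc, hTS, hTU⟩ := TopologicalSpace.isOpen_sUnion_countable S (fun V hV => hV.1)
  have hsub : Kᶜ ⊆ ⋃₀ T := by
    rw [hTU]
    intro x hx
    obtain ⟨V, h1, h2, h3⟩ := hcov x hx
    exact ⟨V, ⟨h1, h3⟩, h2⟩
  refine measure_mono_null hsub ?_
  exact (measure_sUnion_null_iff hTc).mpr (fun V hV => (hTS hV).2)

lemma ae_mem_closure_measSupport (lam : Measure ℝ) :
    ∀ᵐ t ∂lam, t ∈ closure (measSupport lam) := by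
  rw [MeasureTheory.ae_iff]
  exact measSupport_compl_null lam

lemma integrable_polyeval (lam : Measure ℝ)
    (hmom : ∀ k : ℕ, Integrable (fun t : ℝ => t ^ k) lam) (p : Polynomial ℂ) :
    Integrable (fun t : ℝ => p.eval (t : ℂ)) lam := by
  have : (fun t : ℝ => p.eval (t : ℂ)) =
      fun t : ℝ => ∑ k ∈ Finset.range (p.natDegree + 1), p.coeff k * (t : ℂ) ^ k := by
    funext t
    exact Polynomial.eval_eq_sum_range _
  rw [this]
  apply integrable_finset_sum
  intro k _
  have h1 : Integrable (fun t : ℝ => ((t ^ k : ℝ) : ℂ)) lam := (hmom k).ofReal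
  have h2 : (fun t : ℝ => p.coeff k * (t : ℂ) ^ k) =
      fun t : ℝ => p.coeff k * ((t ^ k : ℝ) : ℂ) := by push_cast; rfl
  rw [h2]
  exact h1.const_mul _

lemma isFiniteMeasure_of_mom (lam : Measure ℝ)
    (hmom : ∀ k : ℕ, Integrable (fun t : ℝ => t ^ k) lam) : IsFiniteMeasure lam := by
  have h := hmom 0
  simp only [pow_zero] at h
  rcases (integrable_const_iff).mp h with h1 | h1
  · exact absurd h1 one_ne_zero
  · exact h1

lemma exists_lb (lam : Measure ℝ) (z : ℂ) (hz : z ≠ 0)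
    (h : ∀ t ∈ closure (measSupport lam), (1 : ℂ) + z * (t : ℂ) ≠ 0) :
    ∃ ε : ℝ, 0 < ε ∧ ∀ t ∈ closure (measSupport lam), ε ≤ ‖(1 : ℂ) + z * (t : ℂ)‖ := by
  set K := closure (measSupport lam)
  set R : ℝ := 2 / ‖z‖
  have hz' : 0 < ‖z‖ := norm_pos_iff.mpr hz
  have hout : ∀ t : ℝ, R ≤ |t| → (1 : ℝ) ≤ ‖(1 : ℂ) + z * (t : ℂ)‖ := by
    intro t ht
    have h1 : ‖z * (t : ℂ)‖ = ‖z‖ * |t| := by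
      rw [norm_mul, Complex.norm_real, Real.norm_eq_abs]
    have h2 : 2 ≤ ‖z‖ * |t| := by
      have := (div_le_iff₀ hz').mp ht
      linarith [this, mul_comm |t| ‖z‖ ▸ this]
    have h3 : ‖z * (t : ℂ)‖ ≤ ‖(1 : ℂ) + z * (t : ℂ)‖ + ‖(1:ℂ)‖ := by
      have he : z * (t:ℂ) = ((1:ℂ) + z * (t:ℂ)) - 1 := by ring
      have h3' := norm_sub_le ((1 : ℂ) + z * (t : ℂ)) 1
      rw [← he] at h3'
      exact h3'
    have h4 : ‖(1:ℂ)‖ = 1 := norm_one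
    rw [h1, h4] at h3
    linarith
  set Kc := K ∩ Set.Icc (-R) R with hKc
  have hcomp : IsCompact Kc := isCompact_Icc.inter_left isClosed_closure
  rcases Kc.eq_empty_or_nonempty with he | hne
  · refine ⟨1, one_pos, fun t ht => ?_⟩
    apply hout
    by_contra hR
    push_neg at hR
    have : t ∈ Kc :=
      ⟨ht, Set.mem_Icc.mpr ⟨le_of_lt (abs_lt.mp hR).1, le_of_lt (abs_lt.mp hR).2⟩⟩
    rw [he] at this
    exact this
  · have hcont : ContinuousOn (fun t : ℝ => ‖(1 : ℂ) + z * (t : ℂ)‖) Kc := by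
      fun_prop
    obtain ⟨t₀, ht₀, hmin⟩ := hcomp.exists_isMinOn hne hcont
    set ε₀ := ‖(1 : ℂ) + z * (t₀ : ℂ)‖ with hε₀
    have hε₀pos : 0 < ε₀ := norm_pos_iff.mpr (h t₀ ht₀.1)
    refine ⟨min ε₀ 1, lt_min hε₀pos one_pos, fun t ht => ?_⟩
    by_cases hR : |t| < R
    · have htKc : t ∈ Kc :=
        ⟨ht, Set.mem_Icc.mpr ⟨le_of_lt (abs_lt.mp hR).1, le_of_lt (abs_lt.mp hR).2⟩⟩
      calc min ε₀ 1 ≤ ε₀ := min_le_left _ _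
        _ ≤ ‖(1 : ℂ) + z * (t : ℂ)‖ := hmin htKc
    · push_neg at hR
      calc min ε₀ 1 ≤ 1 := min_le_right _ _
        _ ≤ ‖(1 : ℂ) + z * (t : ℂ)‖ := hout t hR

lemma integrable_zpow (lam : Measure ℝ) [IsFiniteMeasure lam] (z : ℂ) (hz : z ≠ 0)
    (h : ∀ t ∈ closure (measSupport lam), (1 : ℂ) + z * (t : ℂ) ≠ 0) (j : ℕ) :
    Integrable (fun t : ℝ => ((1 : ℂ) + z * (t : ℂ)) ^ (-(j : ℤ))) lam := by
  obtain ⟨ε, hε, hlb⟩ := exists_lb lam z hz h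
  have hmeas : Measurable fun t : ℝ => ((1 : ℂ) + z * (t : ℂ)) ^ (-(j : ℤ)) := by
    simp_rw [zpow_neg, zpow_natCast]
    have hc : Continuous fun t : ℝ => ((1 : ℂ) + z * (t : ℂ)) ^ j := by fun_prop
    exact hc.measurable.inv
  apply Integrable.mono' (integrable_const ((ε ^ j)⁻¹)) hmeas.aestronglyMeasurable
  filter_upwards [ae_mem_closure_measSupport lam] with t ht
  rw [norm_zpow, zpow_neg, zpow_natCast]
  apply inv_anti₀ (pow_pos hε j)
  exact pow_le_pow_left₀ hε.le (hlb t ht) j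

end Aux

/-- Theorem 1.1, converse: if the rule `∑_ν λ_ν g(t_ν)` with
distinct nodes `t_ν ∈ supp(dλ)` integrates exactly against `dλ` all polynomials
of degree `≤ 2n−m−1` and all functions `(1+ζ_μ t)^{−s}`, `1 ≤ s ≤ s_μ`, then
the rule with nodes `t_ν` and weights `w_ν = λ_ν/ω_m(t_ν)` integrates exactly
all polynomials of degree `≤ 2n−1` against `dλ/ω_m`. -/
theorem stmt_2 (lam : Measure ℝ)
    (hmom : ∀ k : ℕ, Integrable (fun t : ℝ => t ^ k) lam)
    (M m n : ℕ) (hn : 1 ≤ n) (hm1 : 1 ≤ m) (hm2 : m ≤ 2 * n)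
    (ζ : Fin M → ℂ) (hζ0 : ∀ μ, ζ μ ≠ 0) (hζinj : Function.Injective ζ)
    (hζ : ∀ (μ : Fin M), ∀ t ∈ closure (measSupport lam),
      (1 : ℂ) + ζ μ * (t : ℂ) ≠ 0)
    (s : Fin M → ℕ) (hs : ∀ μ, 1 ≤ s μ) (hsum : ∑ μ, s μ = m)
    (tq : Fin n → ℝ) (lamq : Fin n → ℂ)
    (htq : ∀ ν, tq ν ∈ measSupport lam) (htqinj : Function.Injective tq)
    (hpoly : ∀ p : Polynomial ℂ, p.degree < ((2 * n - m : ℕ) : WithBot ℕ) →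
      ∫ t : ℝ, p.eval (t : ℂ) ∂lam = ∑ ν, lamq ν * p.eval ((tq ν : ℝ) : ℂ))
    (hrat : ∀ (μ : Fin M) (j : ℕ), 1 ≤ j → j ≤ s μ →
      ∫ t : ℝ, ((1 : ℂ) + ζ μ * (t : ℂ)) ^ (-(j : ℤ)) ∂lam =
        ∑ ν, lamq ν * ((1 : ℂ) + ζ μ * (tq ν : ℂ)) ^ (-(j : ℤ))) :
    ∀ f : Polynomial ℂ, f.degree < (2 * n : ℕ) →
      ∫ t : ℝ, f.eval (t : ℂ) / ∏ μ, ((1 : ℂ) + ζ μ * (t : ℂ)) ^ s μ ∂lam =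
        ∑ ν, (lamq ν / ∏ μ', ((1 : ℂ) + ζ μ' * (tq ν : ℂ)) ^ s μ') *
          f.eval ((tq ν : ℝ) : ℂ) := by
  classical
  intro f hf
  haveI : IsFiniteMeasure lam := isFiniteMeasure_of_mom lam hmom
  open Polynomial in
  -- the denominator polynomial
  set W : Polynomial ℂ := ∏ μ, dpoly ζ μ ^ s μ with hWdef
  have hWdeg : W.degree = (m : WithBot ℕ) := by
    rw [hWdef, Polynomial.degree_prod]
    simp only [dpoly_pow_degree ζ hζ0]
    rw [← Nat.cast_sum, hsum]
  have hW0 : W ≠ 0 := by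
    rw [hWdef]
    exact Finset.prod_ne_zero_iff.mpr fun μ _ => pow_ne_zero _ (dpoly_ne_zero ζ hζ0 μ)
  have hWeval : ∀ x : ℝ, W.eval (x : ℂ) = ∏ μ, ((1 : ℂ) + ζ μ * (x : ℂ)) ^ s μ := by
    intro x
    rw [hWdef, Polynomial.eval_prod]
    exact Finset.prod_congr rfl fun μ _ => by rw [Polynomial.eval_pow, dpoly_eval]
  set lc := W.leadingCoeff with hlcdef
  have hlc : lc ≠ 0 := Polynomial.leadingCoeff_ne_zero.mpr hW0
  set W₀ : Polynomial ℂ := W * Polynomial.C lc⁻¹ with hW₀def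
  have hmonic : W₀.Monic := Polynomial.monic_mul_leadingCoeff_inv hW0
  have hW₀deg : W₀.degree = (m : WithBot ℕ) := by
    rw [hW₀def, Polynomial.degree_mul_leadingCoeff_inv _ hW0, hWdeg]
  set q : Polynomial ℂ := Polynomial.C lc⁻¹ * (f /ₘ W₀) with hqdef
  set r : Polynomial ℂ := f %ₘ W₀ with hrdef
  have hfe : f = W * q + r := by
    have h := Polynomial.modByMonic_add_div f W₀
    rw [hW₀def] at h
    rw [hqdef, hrdef]
    linear_combination -h
  have hrdeg : r.degree < (m : WithBot ℕ) := by
    rw [hrdef, ← hW₀deg]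
    exact Polynomial.degree_modByMonic_lt f hmonic
  have hqdeg : q.degree < ((2 * n - m : ℕ) : WithBot ℕ) := by
    by_cases hd0 : f /ₘ W₀ = 0
    · rw [hqdef, hd0, mul_zero, Polynomial.degree_zero]
      exact WithBot.bot_lt_coe _
    · have hfne : f ≠ 0 := by
        intro h0
        rw [h0, Polynomial.zero_divByMonic] at hd0
        exact hd0 rfl
      have hWle : W₀.degree ≤ f.degree := by
        by_contra hlt
        push_neg at hlt
        exact hd0 ((Polynomial.divByMonic_eq_zero_iff hmonic).mpr hlt)
      have hW₀nd : W₀.natDegree = m := Polynomial.natDegree_eq_of_degree_eq_some hW₀deg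
      have hnd : (f /ₘ W₀).natDegree = f.natDegree - m := by
        rw [Polynomial.natDegree_divByMonic f hmonic, hW₀nd]
      have hfnd : f.natDegree < 2 * n := by
        rw [← Polynomial.natDegree_lt_iff_degree_lt hfne] at hf
        exact hf
      have hmle : m ≤ f.natDegree := by
        rw [hW₀deg, Polynomial.degree_eq_natDegree hfne, Nat.cast_le] at hWle
        exact hWle
      have hqdeg' : q.degree = ((f.natDegree - m : ℕ) : WithBot ℕ) := by
        rw [hqdef, Polynomial.degree_mul, Polynomial.degree_C (inv_ne_zero hlc), zero_add,
          Polynomial.degree_eq_natDegree hd0, hnd]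
      rw [hqdeg', Nat.cast_lt]
      omega
  obtain ⟨c, hc⟩ := exists_decomp ζ hζ0 hζinj s r (by rw [hsum]; exact hrdeg)
  -- the pointwise identity
  have key : ∀ x : ℝ, (∀ μ, (1 : ℂ) + ζ μ * (x : ℂ) ≠ 0) →
      f.eval (x : ℂ) / ∏ μ, ((1 : ℂ) + ζ μ * (x : ℂ)) ^ s μ =
        q.eval (x : ℂ) + ∑ i : (Σ μ : Fin M, Fin (s μ)),
          c i * ((1 : ℂ) + ζ i.1 * (x : ℂ)) ^ (-(((i.2 : ℕ) + 1 : ℕ) : ℤ)) := by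
    intro x hx
    have hω0 : ∏ μ, ((1 : ℂ) + ζ μ * (x : ℂ)) ^ s μ ≠ 0 :=
      Finset.prod_ne_zero_iff.mpr fun μ _ => pow_ne_zero _ (hx μ)
    rw [div_eq_iff hω0]
    have hb : ∀ i : (Σ μ : Fin M, Fin (s μ)),
        ((1 : ℂ) + ζ i.1 * (x : ℂ)) ^ (-(((i.2 : ℕ) + 1 : ℕ) : ℤ)) *
          (∏ μ, ((1 : ℂ) + ζ μ * (x : ℂ)) ^ s μ) = (bpoly ζ s i).eval (x : ℂ) := by
      rintro ⟨μ, j⟩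
      set z : ℂ := (1 : ℂ) + ζ μ * (x : ℂ) with hzdef
      have hz0 : z ≠ 0 := hx μ
      have hsplit : ∏ μ', ((1 : ℂ) + ζ μ' * (x : ℂ)) ^ s μ' =
          (∏ μ' ∈ Finset.univ.erase μ, ((1 : ℂ) + ζ μ' * (x : ℂ)) ^ s μ') * z ^ s μ :=
        (Finset.prod_erase_mul _ _ (Finset.mem_univ μ)).symm
      have hbe : (bpoly ζ s ⟨μ, j⟩).eval (x : ℂ) =
          (∏ μ' ∈ Finset.univ.erase μ, ((1 : ℂ) + ζ μ' * (x : ℂ)) ^ s μ') *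
            z ^ (s μ - ((j : ℕ) + 1)) := by
        rw [bpoly, Polynomial.eval_mul, Polynomial.eval_pow, dpoly_eval,
          Polynomial.eval_prod]
        congr 1
        exact Finset.prod_congr rfl fun μ' _ => by
          rw [Polynomial.eval_pow, dpoly_eval]
      have hzp : z ^ (-(((j : ℕ) + 1 : ℕ) : ℤ)) = (z ^ ((j : ℕ) + 1))⁻¹ := by
        rw [zpow_neg, zpow_natCast]
      have hps : z ^ (s μ - ((j : ℕ) + 1)) * z ^ ((j : ℕ) + 1) = z ^ s μ :=
        pow_sub_mul_pow z (by have := j.isLt; omega)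
      rw [hsplit, hbe, hzp]
      set P : ℂ := ∏ μ' ∈ Finset.univ.erase μ, ((1 : ℂ) + ζ μ' * (x : ℂ)) ^ s μ' with hPdef
      calc (z ^ ((j : ℕ) + 1))⁻¹ * (P * z ^ s μ)
          = P * (z ^ (s μ - ((j : ℕ) + 1)) * (z ^ ((j : ℕ) + 1) * (z ^ ((j : ℕ) + 1))⁻¹)) := by
            rw [← hps]; ring
        _ = P * z ^ (s μ - ((j : ℕ) + 1)) := by
            rw [mul_inv_cancel₀ (pow_ne_zero _ hz0), mul_one]
    calc f.eval (x : ℂ)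
        = W.eval (x : ℂ) * q.eval (x : ℂ) + r.eval (x : ℂ) := by
          rw [hfe]; simp
      _ = (∏ μ, ((1 : ℂ) + ζ μ * (x : ℂ)) ^ s μ) * q.eval (x : ℂ) +
          ∑ i, c i * ((bpoly ζ s i).eval (x : ℂ)) := by
          rw [hWeval, hc]
          congr 1
          rw [Polynomial.eval_finset_sum]
          exact Finset.sum_congr rfl fun i _ => by
            rw [Polynomial.smul_eq_C_mul, Polynomial.eval_mul, Polynomial.eval_C]
      _ = (q.eval (x : ℂ) + ∑ i, c i * ((1 : ℂ) + ζ i.1 * (x : ℂ)) ^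
            (-(((i.2 : ℕ) + 1 : ℕ) : ℤ))) * ∏ μ, ((1 : ℂ) + ζ μ * (x : ℂ)) ^ s μ := by
          rw [add_mul, Finset.sum_mul]
          congr 1
          · ring
          · exact Finset.sum_congr rfl fun i _ => by rw [mul_assoc, hb i]
  -- integrability facts
  have hint_q : Integrable (fun t : ℝ => q.eval (t : ℂ)) lam := integrable_polyeval lam hmom q
  have hint_g : ∀ i : (Σ μ : Fin M, Fin (s μ)),
      Integrable (fun t : ℝ =>
        ((1 : ℂ) + ζ i.1 * (t : ℂ)) ^ (-(((i.2 : ℕ) + 1 : ℕ) : ℤ))) lam :=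
    fun i => integrable_zpow lam (ζ i.1) (hζ0 i.1) (hζ i.1) _
  have hint_sum : Integrable (fun t : ℝ => ∑ i : (Σ μ : Fin M, Fin (s μ)),
      c i * ((1 : ℂ) + ζ i.1 * (t : ℂ)) ^ (-(((i.2 : ℕ) + 1 : ℕ) : ℤ))) lam :=
    integrable_finset_sum _ fun i _ => (hint_g i).const_mul _
  have htqK : ∀ ν, tq ν ∈ closure (measSupport lam) := fun ν => subset_closure (htq ν)
  calc ∫ t : ℝ, f.eval (t : ℂ) / ∏ μ, ((1 : ℂ) + ζ μ * (t : ℂ)) ^ s μ ∂lam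
      = ∫ t : ℝ, (q.eval (t : ℂ) + ∑ i : (Σ μ : Fin M, Fin (s μ)),
          c i * ((1 : ℂ) + ζ i.1 * (t : ℂ)) ^ (-(((i.2 : ℕ) + 1 : ℕ) : ℤ))) ∂lam := by
        apply integral_congr_ae
        filter_upwards [ae_mem_closure_measSupport lam] with t ht
        exact key t fun μ => hζ μ t ht
    _ = (∫ t : ℝ, q.eval (t : ℂ) ∂lam) + ∑ i : (Σ μ : Fin M, Fin (s μ)),
        c i * ∫ t : ℝ, ((1 : ℂ) + ζ i.1 * (t : ℂ)) ^ (-(((i.2 : ℕ) + 1 : ℕ) : ℤ)) ∂lam := by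
        rw [integral_add hint_q hint_sum, integral_finset_sum _ fun i _ => (hint_g i).const_mul _]
        congr 1
        exact Finset.sum_congr rfl fun i _ => integral_const_mul _ _
    _ = (∑ ν, lamq ν * q.eval ((tq ν : ℝ) : ℂ)) + ∑ i : (Σ μ : Fin M, Fin (s μ)),
        c i * ∑ ν, lamq ν * ((1 : ℂ) + ζ i.1 * (tq ν : ℂ)) ^ (-(((i.2 : ℕ) + 1 : ℕ) : ℤ)) := by
        rw [hpoly q hqdeg]
        congr 1
        refine Finset.sum_congr rfl fun i _ => ?_
        rw [hrat i.1 ((i.2 : ℕ) + 1) (by omega) (by have := i.2.isLt; omega)]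
    _ = ∑ ν, lamq ν * (q.eval ((tq ν : ℝ) : ℂ) + ∑ i : (Σ μ : Fin M, Fin (s μ)),
        c i * ((1 : ℂ) + ζ i.1 * (tq ν : ℂ)) ^ (-(((i.2 : ℕ) + 1 : ℕ) : ℤ))) := by
        simp_rw [mul_add, Finset.sum_add_distrib, Finset.mul_sum]
        congr 1
        rw [Finset.sum_comm]
        exact Finset.sum_congr rfl fun ν _ => Finset.sum_congr rfl fun i _ => by ring
    _ = ∑ ν, (lamq ν / ∏ μ', ((1 : ℂ) + ζ μ' * (tq ν : ℂ)) ^ s μ') *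
          f.eval ((tq ν : ℝ) : ℂ) := by
        refine Finset.sum_congr rfl fun ν _ => ?_
        rw [← key (tq ν) fun μ => hζ μ (tq ν) (htqK ν)]
        rw [div_mul_eq_mul_div, mul_div_assoc]
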